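/- Let A₀ be the precision matrix of a Gaussian graphical model and for each node i let θⁱ be the optimal prediction coefficients, so A₀_{ii'} = −θⁱ_{i'} A₀_{ii} for i' ≠ i. Let Ã₀ agree with A₀ on the diagonal and on entries in E ∩ Ê and vanish on off-diagonal entries outside Ê. If for each i the estimation error satisfies ‖θⁱ_{J̃} − θ̂ⁱ_{J̃}‖₂ ≤ c_i, where falsely rejected edges of node i lie in J̃ and θ̂ⁱ vanishes there, then ‖Ã₀ − A₀‖_F² ≤ Σᵢ A₀_{ii}² c_i². -/
import Mathlib


open Matrix

/-- Frobenius norm of a real matrix. -/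
noncomputable def frobNorm {p : ℕ} (M : Matrix (Fin p) (Fin p) ℝ) : ℝ :=
  Real.sqrt (∑ i, ∑ j, (M i j) ^ 2)

/-- Bound on `‖Ã₀ − A₀‖_F²` in terms of the rowwise regression estimation
errors.  `θ i` is the vector of optimal prediction coefficients of node `i`,
`θhat i` its estimate; `Ã₀` agrees with `A₀` on the diagonal and on correctly
estimated edges, and vanishes on falsely rejected off-diagonal entries, where
the estimated coefficient is zero. -/
theorem stmt9 {p : ℕ} (A₀ Atil : Matrix (Fin p) (Fin p) ℝ)
    (θ θhat : Fin p → Fin p → ℝ) (c : Fin p → ℝ)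
    (hdiag : ∀ i, Atil i i = A₀ i i)
    (hreg : ∀ i i' : Fin p, i ≠ i' → A₀ i i' = -(θ i i') * A₀ i i)
    (hoff : ∀ i i' : Fin p, i ≠ i' →
      Atil i i' = A₀ i i' ∨ (Atil i i' = 0 ∧ θhat i i' = 0))
    (herr : ∀ i, Real.sqrt (∑ i', (θ i i' - θhat i i') ^ 2) ≤ c i) :
    frobNorm (Atil - A₀) ^ 2 ≤ ∑ i, (A₀ i i) ^ 2 * (c i) ^ 2 := by
  have hsq : frobNorm (Atil - A₀) ^ 2 = ∑ i, ∑ j, ((Atil - A₀) i j) ^ 2 := by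
    unfold frobNorm
    rw [Real.sq_sqrt]
    positivity
  rw [hsq]
  apply Finset.sum_le_sum
  intro i _
  have hc : ∑ i', (θ i i' - θhat i i') ^ 2 ≤ c i ^ 2 := by
    have h0 : (0:ℝ) ≤ ∑ i', (θ i i' - θhat i i') ^ 2 := by positivity
    calc ∑ i', (θ i i' - θhat i i') ^ 2
        = Real.sqrt (∑ i', (θ i i' - θhat i i') ^ 2) ^ 2 := (Real.sq_sqrt h0).symm
      _ ≤ c i ^ 2 := by
          apply pow_le_pow_left₀ (Real.sqrt_nonneg _) (herr i)
  calc ∑ j, ((Atil - A₀) i j) ^ 2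
      ≤ ∑ j, (A₀ i i) ^ 2 * (θ i j - θhat i j) ^ 2 := by
        apply Finset.sum_le_sum
        intro j _
        by_cases hij : i = j
        · subst hij
          simp [hdiag i]
          positivity
        · rcases hoff i j hij with h | ⟨h1, h2⟩
          · simp [Matrix.sub_apply, h]
            positivity
          · have : (Atil - A₀) i j = -A₀ i j := by simp [Matrix.sub_apply, h1]
            rw [this, hreg i j hij, h2]
            ring_nf
            rfl
    _ = (A₀ i i) ^ 2 * ∑ j, (θ i j - θhat i j) ^ 2 := by rw [Finset.mul_sum]
    _ ≤ (A₀ i i) ^ 2 * (c i) ^ 2 := by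
        apply mul_le_mul_of_nonneg_left hc (by positivity)
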